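/- Let 𝔫 = ℝ ⊕ 𝔥₃ be the 4-dimensional real nilpotent Lie algebra with basis y, x₁, x₂, x₃ in which the only nonzero bracket among basis vectors is ⁅x₃, x₂⁆ = x₁. Let D be a derivation of 𝔫 such that the underlying linear map has trace zero, D(x₁) = 0, and D(y) lies in the span of x₁ (these conditions say that D is traceless on the derived algebra span{x₁} = [𝔫,𝔫] and on the center span{x₁, y} = Z(𝔫)). Then there exist w ∈ 𝔫 and real numbers a, b, c, d, e, f such that D = ad(w) + E, where E is the linear map with E(y) = d·x₁, E(x₁) = 0, E(x₂) = e·y + a·x₂ + c·x₃, and E(x₃) = f·y + b·x₂ − a·x₃. -/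

import Mathlib

/-- Let `𝔫 = ℝ ⊕ 𝔥₃` be the 4-dimensional real nilpotent Lie
algebra with basis `y, x₁, x₂, x₃ = b 0, b 1, b 2, b 3` whose only nonzero bracket
among basis vectors is `⁅x₃, x₂⁆ = x₁`.  Let `D` be a derivation of `𝔫` with
traceless underlying linear map such that `D x₁ = 0` and `D y ∈ span{x₁}` (so `D` is
traceless on `[𝔫,𝔫] = span{x₁}` and on `Z(𝔫) = span{x₁, y}`).  Then there exist
`w ∈ 𝔫` and reals `a, β, c, d, e, f` with `D = ad(w) + E`, where `E y = d·x₁`,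
`E x₁ = 0`, `E x₂ = e·y + a·x₂ + c·x₃`, `E x₃ = f·y + β·x₂ − a·x₃`. -/
theorem stmt15
    (L : Type) [LieRing L] [LieAlgebra ℝ L]
    (b : Module.Basis (Fin 4) ℝ L)
    (h32 : ⁅b 3, b 2⁆ = b 1)
    (h31 : ⁅b 3, b 1⁆ = 0) (h30 : ⁅b 3, b 0⁆ = 0)
    (h21 : ⁅b 2, b 1⁆ = 0) (h20 : ⁅b 2, b 0⁆ = 0) (h10 : ⁅b 1, b 0⁆ = 0)
    (D : LieDerivation ℝ L L)
    (htr : LinearMap.trace ℝ L D.toLinearMap = 0)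
    (hDx1 : D (b 1) = 0)
    (hDy : D (b 0) ∈ Submodule.span ℝ {b 1}) :
    ∃ w : L, ∃ a β c d e f : ℝ,
      D (b 0) = ⁅w, b 0⁆ + d • b 1 ∧
      D (b 1) = ⁅w, b 1⁆ ∧
      D (b 2) = ⁅w, b 2⁆ + e • b 0 + a • b 2 + c • b 3 ∧
      D (b 3) = ⁅w, b 3⁆ + f • b 0 + β • b 2 + (-a) • b 3 := by
  obtain ⟨d, hd⟩ := Submodule.mem_span_singleton.mp hDy
  -- coordinates
  set c0 := b.repr (D (b 2)) 0 with hc0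
  set c1 := b.repr (D (b 2)) 1 with hc1
  set c2 := b.repr (D (b 2)) 2 with hc2
  set c3 := b.repr (D (b 2)) 3 with hc3
  set e0 := b.repr (D (b 3)) 0 with he0
  set e1 := b.repr (D (b 3)) 1 with he1
  set e2 := b.repr (D (b 3)) 2 with he2
  set e3 := b.repr (D (b 3)) 3 with he3
  have hD2 : D (b 2) = c0 • b 0 + c1 • b 1 + c2 • b 2 + c3 • b 3 := by
    have := b.sum_repr (D (b 2))
    rw [Fin.sum_univ_four] at this
    linear_combination (norm := module) this.symm
  have hD3 : D (b 3) = e0 • b 0 + e1 • b 1 + e2 • b 2 + e3 • b 3 := by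
    have := b.sum_repr (D (b 3))
    rw [Fin.sum_univ_four] at this
    linear_combination (norm := module) this.symm
  -- trace computation
  have htrace : c2 + e3 = 0 := by
    have h := LinearMap.trace_eq_matrix_trace ℝ b D.toLinearMap
    rw [htr] at h
    rw [Matrix.trace, Fin.sum_univ_four] at h
    simp only [Matrix.diag_apply, LinearMap.toMatrix_apply, LieDerivation.coeFn_coe] at h
    rw [hDx1, ← hd] at h
    simp only [map_zero, map_smul, Module.Basis.repr_self, Finsupp.coe_zero, Pi.zero_apply,
      Finsupp.smul_single, Finsupp.single_apply] at h
    norm_num at h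
    linarith [h]
  have he3' : e3 = -c2 := by linarith
  refine ⟨(-e1) • b 2 + c1 • b 3, c2, e2, c3, d, c0, e0, ?_, ?_, ?_, ?_⟩
  · rw [← hd, add_lie, smul_lie, smul_lie, h20, h30]
    module
  · rw [hDx1, add_lie, smul_lie, smul_lie, h21, h31]
    module
  · rw [hD2, add_lie, smul_lie, smul_lie, h32, lie_self]
    module
  · have h23 : ⁅b 2, b 3⁆ = -b 1 := by rw [← lie_skew, h32]
    rw [hD3, he3', add_lie, smul_lie, smul_lie, h23, lie_self]
    module
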